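/- For every real c ≠ 0, the series Σ_{k=1}^{∞} 1/((k − 1/2)² + c²/(4π²)) converges and equals (π²/c)·tanh(c/2). (Consequently, the mean of a Pólya-Gamma PG(b,c) random variable, which by its defining infinite Gamma convolution equals (b/(2π²))·Σ_{k=1}^{∞} 1/((k − 1/2)² + c²/(4π²)), is (b/(2c))·tanh(c/2).) -/

import Mathlib

open Complex MeasureTheory

noncomputable section PG

namespace PGaux

variable (c : ℝ)

def F (c : ℝ) : ℝ → ℂ := fun x =>
  Complex.exp ((c + Real.pi * I) * x) - Complex.exp c * Complex.exp ((-c + Real.pi * I) * x)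

lemma F_zero : F c 0 = 1 - Complex.exp c := by
  simp [F]

lemma F_endpoints : F c 0 = F c (0 + 1) := by
  have h1 : ((c : ℂ) + Real.pi * I) * ((0 : ℝ) + 1 : ℝ) = c + Real.pi * I := by push_cast; ring
  have h2 : ((-c : ℂ) + Real.pi * I) * ((0 : ℝ) + 1 : ℝ) = -c + Real.pi * I := by push_cast; ring
  rw [F_zero, F, h1, h2, Complex.exp_add, Complex.exp_add, Complex.exp_pi_mul_I]
  have h3 : Complex.exp (c:ℂ) * Complex.exp (-(c:ℂ)) = 1 := by
    rw [← Complex.exp_add]; simp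
  linear_combination -h3

instance : Fact ((0:ℝ) < 1) := ⟨one_pos⟩

def f (c : ℝ) : C(AddCircle (1:ℝ), ℂ) :=
  ⟨AddCircle.liftIco 1 0 (F c), by
    apply AddCircle.liftIco_continuous (F_endpoints c)
    exact (by unfold F; fun_prop : Continuous (F c)).continuousOn⟩

lemma coeff (hc : c ≠ 0) (n : ℤ) :
    fourierCoeff (⇑(f c)) n = (-2*(c:ℂ)*(1 + Complex.exp c)) *
      ((1 / (c^2 + Real.pi^2 * (2*(n:ℝ)-1)^2) : ℝ) : ℂ) := by
  have h0 : (⇑(f c)) = AddCircle.liftIco 1 0 (F c) := rfl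
  rw [h0, fourierCoeff_liftIco_eq, fourierCoeffOn_eq_integral]
  simp only [fourier_coe_apply, smul_eq_mul, zero_add, sub_zero]
  have key : (fun x : ℝ => Complex.exp (2*Real.pi*I*(-n)*x/1) * F c x) =
      (fun x : ℝ => Complex.exp (((c:ℂ) - I*((Real.pi:ℂ) * (2*(n:ℂ)-1)))*x)
        - Complex.exp c * Complex.exp ((-(c:ℂ) - I*((Real.pi:ℂ) * (2*(n:ℂ)-1)))*x)) := by
    funext x
    simp only [F, mul_sub]
    rw [← Complex.exp_add, mul_left_comm, ← Complex.exp_add]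
    congr 2 <;> push_cast <;> ring
  push_cast
  rw [key]
  have hre : ∀ r : ℝ, r ≠ 0 → ((r:ℂ) - I*((Real.pi:ℂ) * (2*(n:ℂ)-1))) ≠ 0 := by
    intro r hr h
    have h' := congrArg Complex.re h
    simp [Complex.sub_re, Complex.mul_re] at h'
    exact hr h'
  have h4 : ((c:ℂ) - I*((Real.pi:ℂ) * (2*(n:ℂ)-1))) ≠ 0 := hre c hc
  have h5 : (-(c:ℂ) - I*((Real.pi:ℂ) * (2*(n:ℂ)-1))) ≠ 0 := by
    have := hre (-c) (neg_ne_zero.mpr hc)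
    push_cast at this ⊢
    exact this
  have hi1 : IntervalIntegrable (fun x : ℝ => Complex.exp (((c:ℂ) - I*((Real.pi:ℂ) * (2*(n:ℂ)-1)))*x)) volume 0 1 := by
    apply Continuous.intervalIntegrable; fun_prop
  have hi2 : IntervalIntegrable (fun x : ℝ => Complex.exp c * Complex.exp ((-(c:ℂ) - I*((Real.pi:ℂ) * (2*(n:ℂ)-1)))*x)) volume 0 1 := by
    apply Continuous.intervalIntegrable; fun_prop
  rw [intervalIntegral.integral_sub hi1 hi2, intervalIntegral.integral_const_mul,
    integral_exp_mul_complex h4, integral_exp_mul_complex h5]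
  have h2pi := Complex.exp_int_mul_two_pi_mul_I (-n)
  push_cast at h2pi
  have he1 : Complex.exp (((c:ℂ) - I*((Real.pi:ℂ) * (2*(n:ℂ)-1)))) = - Complex.exp c := by
    rw [show ((c:ℂ) - I*((Real.pi:ℂ) * (2*(n:ℂ)-1))) = ((c:ℂ) + Real.pi*I) + (-(n:ℂ))*(2*Real.pi*I) by ring,
      Complex.exp_add, Complex.exp_add, h2pi, Complex.exp_pi_mul_I]
    ring
  have he2 : Complex.exp ((-(c:ℂ) - I*((Real.pi:ℂ) * (2*(n:ℂ)-1)))) = - Complex.exp (-(c:ℂ)) := by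
    rw [show (-(c:ℂ) - I*((Real.pi:ℂ) * (2*(n:ℂ)-1))) = (-(c:ℂ) + Real.pi*I) + (-(n:ℂ))*(2*Real.pi*I) by ring,
      Complex.exp_add, Complex.exp_add, h2pi, Complex.exp_pi_mul_I]
    ring
  simp only [Complex.ofReal_one, Complex.ofReal_zero, mul_one, mul_zero, Complex.exp_zero, he1, he2]
  have hcc : Complex.exp (c:ℂ) * Complex.exp (-(c:ℂ)) = 1 := by
    rw [← Complex.exp_add]; simp
  have hD : ((c:ℂ)^2 + (Real.pi:ℂ)^2*(2*(n:ℂ)-1)^2) ≠ 0 := by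
    have hpos : (0:ℝ) < c^2 + Real.pi^2*(2*(n:ℝ)-1)^2 := by positivity
    have heq : ((c:ℂ)^2 + (Real.pi:ℂ)^2*(2*(n:ℂ)-1)^2) = ((c^2 + Real.pi^2*(2*(n:ℝ)-1)^2 : ℝ) : ℂ) := by
      push_cast; ring
    rw [heq]
    exact_mod_cast hpos.ne'
  rw [one_div_one, one_smul]
  have hab : ((c:ℂ)^2 + (Real.pi:ℂ)^2*(2*(n:ℂ)-1)^2) = -(((c:ℂ) - I*((Real.pi:ℂ) * (2*(n:ℂ)-1))) * (-(c:ℂ) - I*((Real.pi:ℂ) * (2*(n:ℂ)-1)))) := by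
    linear_combination ((Real.pi:ℂ) * (2*(n:ℂ)-1))^2 * Complex.I_sq
  have hm : (1 / -(((c:ℂ) - I*((Real.pi:ℂ) * (2*(n:ℂ)-1))) * (-(c:ℂ) - I*((Real.pi:ℂ) * (2*(n:ℂ)-1))))) *
      (((c:ℂ) - I*((Real.pi:ℂ) * (2*(n:ℂ)-1))) * (-(c:ℂ) - I*((Real.pi:ℂ) * (2*(n:ℂ)-1)))) = -1 := by
    rw [div_mul_eq_mul_div, one_mul, div_neg, div_self (mul_ne_zero h4 h5)]
  rw [hab, mul_div_assoc', div_sub_div _ _ h4 h5, div_eq_iff (mul_ne_zero h4 h5),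
    mul_assoc (-2 * (c:ℂ) * (1 + Complex.exp c)), hm]
  linear_combination ((c:ℂ) - I*((Real.pi:ℂ) * (2*(n:ℂ)-1))) * hcc

lemma sq_summable : Summable (fun n : ℕ => 1 / (((n:ℝ))+1)^2) := by
  have h : Summable (fun n : ℕ => 1 / ((n:ℝ))^2) := Real.summable_one_div_nat_pow.mpr one_lt_two
  have := (summable_nat_add_iff (f := fun n : ℕ => 1 / ((n:ℝ))^2) 1).mpr h
  refine this.congr fun n => ?_
  push_cast; ring

lemma S1 (hc : c ≠ 0) : Summable (fun n : ℕ => 1 / (c^2 + Real.pi^2 * (2*(n:ℝ)+1)^2)) := by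
  have hb : Summable (fun n : ℕ => (1/Real.pi^2) * (1 / (((n:ℝ))+1)^2)) :=
    (sq_summable).mul_left _
  refine Summable.of_nonneg_of_le (fun n => by positivity) (fun n => ?_) hb
  have hπ := Real.pi_pos
  have hn : (0:ℝ) ≤ (n:ℝ) := Nat.cast_nonneg n
  rw [show (1/Real.pi^2) * (1 / (((n:ℝ))+1)^2) = 1 / (Real.pi^2 * ((n:ℝ)+1)^2) by
    rw [one_div_mul_one_div]]
  apply one_div_le_one_div_of_le
  · positivity
  · nlinarith [sq_nonneg c, mul_nonneg (mul_nonneg (sq_nonneg Real.pi) hn) hn]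

lemma g_summable (hc : c ≠ 0) :
    Summable (fun n : ℤ => 1 / (c^2 + Real.pi^2 * (2*(n:ℝ)-1)^2)) := by
  apply Summable.of_nat_of_neg
  · rw [← summable_nat_add_iff 1]
    refine (S1 c hc).congr fun n => ?_
    push_cast
    ring_nf
  · refine (S1 c hc).congr fun n => ?_
    push_cast
    ring_nf

lemma htanh : Real.tanh (c/2) * (Real.exp c + 1) = Real.exp c - 1 := by
  rw [Real.tanh_eq_sinh_div_cosh, Real.sinh_eq, Real.cosh_eq]
  have h1 : Real.exp (c/2) ≠ 0 := (Real.exp_pos _).ne'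
  have h2 : Real.exp (-(c/2)) = (Real.exp (c/2))⁻¹ := Real.exp_neg _
  have h3 : Real.exp c = Real.exp (c/2) * Real.exp (c/2) := by
    rw [← Real.exp_add]; ring_nf
  have h4 : Real.exp (c/2) + Real.exp (-(c/2)) ≠ 0 := by positivity
  rw [h2] at h4 ⊢
  rw [h3]
  field_simp

lemma zsum (hc : c ≠ 0) :
    HasSum (fun n : ℤ => 1 / (c^2 + Real.pi^2 * (2*(n:ℝ)-1)^2))
      (Real.tanh (c/2) / (2*c)) := by
  set g : ℤ → ℝ := fun n => 1 / (c^2 + Real.pi^2 * (2*(n:ℝ)-1)^2) with hg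
  set K : ℂ := -2*(c:ℂ)*(1 + Complex.exp c) with hK
  have hKr : K = ((-2*c*(1 + Real.exp c) : ℝ) : ℂ) := by
    rw [hK, ← Complex.ofReal_exp]; push_cast; ring
  have hK0 : K ≠ 0 := by
    rw [hKr]
    have : (-2*c*(1 + Real.exp c) : ℝ) ≠ 0 := by
      apply mul_ne_zero (mul_ne_zero (by norm_num) hc)
      positivity
    exact_mod_cast this
  have hsummC : Summable (fourierCoeff (⇑(f c))) := by
    refine Summable.congr ?_ (fun n => (coeff c hc n).symm)
    exact (Complex.summable_ofReal.mpr (g_summable c hc)).mul_left K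
  have hpt := has_pointwise_sum_fourier_series_of_summable hsummC (0 : AddCircle (1:ℝ))
  simp only [fourier_eval_zero, smul_eq_mul, mul_one] at hpt
  have hf0 : (f c) (0 : AddCircle (1:ℝ)) = 1 - Complex.exp c := by
    have : ((0:ℝ) : AddCircle (1:ℝ)) = (0 : AddCircle (1:ℝ)) := by norm_cast
    rw [← this]
    show AddCircle.liftIco 1 0 (F c) ((0:ℝ) : AddCircle (1:ℝ)) = _
    rw [AddCircle.liftIco_coe_apply (by norm_num : (0:ℝ) ∈ Set.Ico (0:ℝ) (0+1))]
    exact F_zero c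
  rw [hf0] at hpt
  have hpt2 : HasSum (fun n : ℤ => K * ((g n : ℝ) : ℂ)) (1 - Complex.exp c) := by
    refine hpt.congr_fun fun n => ?_
    exact (coeff c hc n).symm
  have hreal : (-2*c*(1 + Real.exp c)) * (Real.tanh (c/2) / (2*c)) = 1 - Real.exp c := by
    have hden : Real.exp c + 1 ≠ 0 := by positivity
    have ht : Real.tanh (c/2) = (Real.exp c - 1)/(Real.exp c + 1) := by
      rw [eq_div_iff hden]; exact htanh c
    rw [ht]
    field_simp
    ring
  have hKS : K * ((Real.tanh (c/2) / (2*c) : ℝ) : ℂ) = 1 - Complex.exp c := by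
    rw [hKr, ← Complex.ofReal_exp, ← Complex.ofReal_mul, hreal]
    push_cast; ring
  rw [← hKS] at hpt2
  have := (hasSum_mul_left_iff hK0).mp hpt2
  exact Complex.hasSum_ofReal.mp this

lemma hteq (hc : c ≠ 0) (n : ℕ) :
    (1 / (((n : ℝ) + 1 - 1 / 2) ^ 2 + c ^ 2 / (4 * Real.pi ^ 2))) / (4*Real.pi^2)
      = 1 / (c^2 + Real.pi^2 * (2*(((n:ℤ)+1 : ℤ):ℝ)-1)^2) := by
  have hπ : Real.pi ≠ 0 := Real.pi_ne_zero
  rw [div_div]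
  congr 1
  push_cast
  field_simp
  ring

lemma hteq2 (hc : c ≠ 0) (n : ℕ) :
    (1 / ((((n+1) : ℝ) + 1 - 1 / 2) ^ 2 + c ^ 2 / (4 * Real.pi ^ 2))) / (4*Real.pi^2)
      = 1 / (c^2 + Real.pi^2 * (2*((-((n:ℤ)+1) : ℤ):ℝ)-1)^2) := by
  have hπ : Real.pi ≠ 0 := Real.pi_ne_zero
  rw [div_div]
  congr 1
  push_cast
  field_simp
  ring

end PGaux

end PG


/-- For c ≠ 0, Σ_{k=1}^{∞} 1/((k − 1/2)² + c²/(4π²)) converges and equals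
(π²/c)·tanh(c/2), whence the mean of a PG(b,c) random variable is
(b/(2c))·tanh(c/2). -/
theorem pg_mean_series (c : ℝ) (hc : c ≠ 0) :
    Summable (fun k : ℕ =>
      1 / (((k : ℝ) + 1 - 1 / 2) ^ 2 + c ^ 2 / (4 * Real.pi ^ 2))) ∧
    ∑' k : ℕ, 1 / (((k : ℝ) + 1 - 1 / 2) ^ 2 + c ^ 2 / (4 * Real.pi ^ 2))
      = Real.pi ^ 2 / c * Real.tanh (c / 2) := by
  have hπ : Real.pi ≠ 0 := Real.pi_ne_zero
  set t : ℕ → ℝ := fun k => 1 / (((k : ℝ) + 1 - 1 / 2) ^ 2 + c ^ 2 / (4 * Real.pi ^ 2)) with ht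
  have hsum : Summable t := by
    refine Summable.of_nonneg_of_le (fun k => by positivity) (fun k => ?_)
      ((PGaux.sq_summable).mul_left 4)
    have hk : (0:ℝ) ≤ (k:ℝ) := Nat.cast_nonneg k
    have hc2 : (0:ℝ) ≤ c^2/(4*Real.pi^2) := by positivity
    have hden : ((k:ℝ)+1)^2/4 ≤ ((k : ℝ) + 1 - 1 / 2) ^ 2 + c ^ 2 / (4 * Real.pi ^ 2) := by
      nlinarith
    calc t k ≤ 1 / (((k:ℝ)+1)^2/4) := one_div_le_one_div_of_le (by positivity) hden
      _ = 4 * (1/(((k:ℝ)+1)^2)) := by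
          rw [one_div_div]
          ring
  refine ⟨hsum, ?_⟩
  set G : ℤ → ℝ := fun n => 1/(c^2+Real.pi^2*(2*(n:ℝ)-1)^2) with hG
  have hzs : HasSum G (Real.tanh (c/2) / (2*c)) := PGaux.zsum c hc
  set A : ℝ := ∑' k, t k with hA
  have hhs : HasSum t A := hsum.hasSum
  have h1 : HasSum (fun n : ℕ => G (↑(n+1))) (A/(4*Real.pi^2)) := by
    refine (hhs.div_const _).congr_fun fun n => ?_
    have := PGaux.hteq c hc n
    simp only [ht, hG]
    push_cast at this ⊢
    linarith [this]
  have stepPos : HasSum (fun n : ℕ => G ↑n) (A/(4*Real.pi^2) + G 0) := by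
    have h2 := (hasSum_nat_add_iff (f := fun n : ℕ => G ↑n) 1).mp h1
    simpa using h2
  have h3 : HasSum (fun n : ℕ => t (n+1)) (A - t 0) := by
    refine (hasSum_nat_add_iff (f := t) 1).mpr ?_
    simpa using hhs
  have stepNeg : HasSum (fun n : ℕ => G (-(↑n+1))) ((A - t 0)/(4*Real.pi^2)) := by
    refine (h3.div_const _).congr_fun fun n => ?_
    have := PGaux.hteq2 c hc n
    simp only [ht, hG]
    push_cast at this ⊢
    linarith [this]
  have total : HasSum G ((A/(4*Real.pi^2) + G 0) + (A - t 0)/(4*Real.pi^2)) :=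
    HasSum.of_nat_of_neg_add_one stepPos (by
      refine stepNeg.congr_fun fun n => ?_
      norm_num)
  have uniq := total.unique hzs
  have hG0 : G 0 = t 0/(4*Real.pi^2) := by
    simp only [hG, ht]
    push_cast
    rw [div_div]
    congr 1
    field_simp
    ring
  rw [hG0, sub_div] at uniq
  have hfin : A/(2*Real.pi^2) = Real.tanh (c/2)/(2*c) := by
    rw [← uniq]
    field_simp
    ring
  rw [div_eq_div_iff (by positivity) (by
    rcases lt_or_gt_of_ne hc with h | h
    · exact (by nlinarith : (2*c) ≠ 0)
    · exact (by nlinarith : (2*c) ≠ 0))] at hfin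
  field_simp
  linear_combination hfin / 2
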